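/- Let P be a subfield of ℂ, q a prime number, and ε ∈ ℂ a root of unity of order q. If a ∈ P is q-simple in P, then a is q-simple in P(ε). -/

import Mathlib

noncomputable section

/-- The subfield of `ℂ` generated by the set `s` over the subfield `P`. -/
def SF (P : Subfield ℂ) (s : Set ℂ) : Subfield ℂ := Subfield.closure ((P : Set ℂ) ∪ s)

/-- `x` is a root of unity in `ℂ`. -/
def IsRootOfUnity (x : ℂ) : Prop := ∃ n : ℕ, 0 < n ∧ x ^ n = 1

/-- `a` is `k`-simple in the subfield `P` of `ℂ`. -/
def IsKSimple (P : Subfield ℂ) (k : ℕ) (a : ℂ) : Prop :=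
  a ∈ P ∧ a ≠ 0 ∧ ¬ IsRootOfUnity a ∧
  ∀ (b ε : ℂ) (d : ℤ), b ∈ P → IsRootOfUnity ε →
    a ^ d = b ^ (k : ℤ) * ε → (k : ℤ) ∣ d

set_option synthInstance.maxHeartbeats 1000000
set_option maxHeartbeats 1000000

/-- If `q` is prime, `ε` a root of unity of order `q`, and `a ∈ P` is
`q`-simple in `P`, then `a` is `q`-simple in `P(ε)`. -/
theorem ksimple_adjoin_prime_root
    (P : Subfield ℂ) (q : ℕ) (hq : q.Prime)
    (ε : ℂ) (hε : IsPrimitiveRoot ε q)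
    (a : ℂ) (ha : IsKSimple P q a) :
    IsKSimple (SF P {ε}) q a := by
  obtain ⟨haP, ha0, haru, hkey⟩ := ha
  have hq2 : 2 ≤ q := hq.two_le
  set E := IntermediateField.adjoin ↥P ({ε} : Set ℂ) with hEdef
  have hrange : Set.range (algebraMap ↥P ℂ) = (P : Set ℂ) := by
    ext y; constructor
    · rintro ⟨z, rfl⟩; exact z.2
    · intro hy; exact ⟨⟨y, hy⟩, rfl⟩
  have hmemE : ∀ x : ℂ, x ∈ SF P {ε} ↔ x ∈ E := by
    intro x; unfold SF
    rw [← IntermediateField.mem_toSubfield, IntermediateField.adjoin_toSubfield, hrange]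
  -- ε is integral over P
  have hεint : IsIntegral ↥P ε := by
    refine ⟨Polynomial.X ^ q - Polynomial.C 1, Polynomial.monic_X_pow_sub_C 1 (by omega), ?_⟩
    simp [hε.pow_eq_one]
  haveI : FiniteDimensional ↥P E := IntermediateField.adjoin.finiteDimensional hεint
  set m := Module.finrank ↥P ↥E with hm
  have hdeg : m = (minpoly ↥P ε).natDegree := by
    rw [hm, hEdef, IntermediateField.adjoin.finrank hεint]
  have hm0 : 0 < m := by
    rw [hdeg]; exact minpoly.natDegree_pos hεint
  -- m < q
  have hmq : m < q := by
    have hmin : minpoly ↥P ε ∣ (∑ i ∈ Finset.range q, Polynomial.X ^ i) * (Polynomial.X - 1) := by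
      rw [geom_sum_mul]
      apply minpoly.dvd
      simp [hε.pow_eq_one]
    have hprime := minpoly.prime hεint
    rcases hprime.dvd_mul.mp hmin with h | h
    · have hne : (∑ i ∈ Finset.range q, (Polynomial.X : Polynomial ↥P) ^ i) ≠ 0 := by
        intro h0
        have := congrArg (Polynomial.eval (1 : ↥P)) h0
        simp [Polynomial.eval_finset_sum] at this
        omega
      have hle := Polynomial.natDegree_le_of_dvd h hne
      have hle2 : (∑ i ∈ Finset.range q, (Polynomial.X : Polynomial ↥P) ^ i).natDegree ≤ q - 1 := by
        apply Polynomial.natDegree_sum_le_of_forall_le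
        intro i hi
        simpa using Nat.le_sub_one_of_lt (Finset.mem_range.mp hi)
      omega
    · have hle := Polynomial.natDegree_le_of_dvd h (by
        intro h0
        have := congrArg (Polynomial.eval (0 : ↥P)) h0
        simp at this)
      have : (Polynomial.X - (1 : Polynomial ↥P)).natDegree ≤ 1 := by
        simpa using (Polynomial.natDegree_X_sub_C (1 : ↥P)).le
      omega
  -- membership facts
  have haE : a ∈ E := E.algebraMap_mem ⟨a, haP⟩
  refine ⟨Subfield.subset_closure (Or.inl haP), ha0, haru, ?_⟩
  intro b η d hb hη heq
  have hbE : b ∈ E := (hmemE b).1 hb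
  have hb0 : b ≠ 0 := by
    rintro rfl
    rw [zero_zpow _ (by exact_mod_cast hq.ne_zero), zero_mul] at heq
    exact zpow_ne_zero d ha0 heq
  set A : E := ⟨a, haE⟩ with hA
  set B : E := ⟨b, hbE⟩ with hB
  have hA0 : A ≠ 0 := fun h => ha0 (congrArg Subtype.val h)
  have hB0 : B ≠ 0 := fun h => hb0 (congrArg Subtype.val h)
  set H : E := A ^ d * (B ^ (q : ℤ))⁻¹ with hH
  have hcoeH : (H : ℂ) = η := by
    have hBq : (b : ℂ) ^ (q : ℤ) ≠ 0 := zpow_ne_zero _ hb0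
    have : (H : ℂ) = a ^ d * (b ^ (q : ℤ))⁻¹ := by
      rw [hH]
      push_cast [map_zpow₀ (algebraMap E ℂ)]
      rfl
    rw [this, heq]
    field_simp
  -- equation in E
  have heqE : A ^ d = B ^ (q : ℤ) * H := by
    rw [hH]
    field_simp
  -- norm
  have hnorm : ∀ x : E, x ≠ 0 → ∀ k : ℤ, Algebra.norm ↥P (x ^ k) = Algebra.norm ↥P x ^ k := by
    intro x hx k
    induction k using Int.rec with
    | ofNat n => simp [zpow_natCast]
    | negSucc n =>
      have hx1 : x ^ (n + 1) ≠ 0 := pow_ne_zero _ hx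
      have h1 : Algebra.norm ↥P ((x ^ (n + 1))⁻¹) * Algebra.norm ↥P (x ^ (n + 1)) = 1 := by
        rw [← map_mul, inv_mul_cancel₀ hx1, map_one]
      rw [zpow_negSucc, zpow_negSucc, eq_inv_of_mul_eq_one_left h1, map_pow]
  have hNA : Algebra.norm ↥P A = (⟨a, haP⟩ : ↥P) ^ m := by
    have : A = algebraMap ↥P E ⟨a, haP⟩ := rfl
    rw [this, Algebra.norm_algebraMap]
  have hNeq : (⟨a, haP⟩ : ↥P) ^ ((m : ℤ) * d)
      = Algebra.norm ↥P B ^ (q : ℤ) * Algebra.norm ↥P H := by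
    have := congrArg (Algebra.norm ↥P) heqE
    rw [map_mul, hnorm A hA0 d, hnorm B hB0 (q : ℤ), hNA] at this
    rw [zpow_mul, zpow_natCast]
    exact this
  -- H is a root of unity, hence so is its norm
  obtain ⟨n, hn0, hηn⟩ := hη
  have hHn : H ^ n = 1 := by
    apply Subtype.ext
    push_cast [hcoeH]
    exact hηn
  have hNH_ru : IsRootOfUnity ((Algebra.norm ↥P H : ↥P) : ℂ) := by
    refine ⟨n, hn0, ?_⟩
    have : Algebra.norm ↥P H ^ n = 1 := by rw [← map_pow, hHn, map_one]
    exact_mod_cast congrArg (fun x : ↥P => (x : ℂ)) this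
  -- push the norm equation to ℂ and apply q-simplicity in P
  have hCeq : a ^ ((m : ℤ) * d)
      = ((Algebra.norm ↥P B : ↥P) : ℂ) ^ (q : ℤ) * ((Algebra.norm ↥P H : ↥P) : ℂ) := by
    have := congrArg (fun x : ↥P => (x : ℂ)) hNeq
    push_cast [map_zpow₀ (P.subtype)] at this
    convert this using 2
    · exact (map_zpow₀ P.subtype ⟨a, haP⟩ _).symm
    · exact (map_zpow₀ P.subtype (Algebra.norm ↥P B) _).symm
  have hdvd : (q : ℤ) ∣ (m : ℤ) * d :=
    hkey _ _ _ (Algebra.norm ↥P B).2 hNH_ru hCeq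
  have hqZ : Prime ((q : ℤ)) := Nat.prime_iff_prime_int.mp hq
  rcases hqZ.dvd_mul.mp hdvd with h | h
  · exfalso
    have : q ∣ m := Int.natCast_dvd_natCast.mp h
    have := Nat.le_of_dvd hm0 this
    omega
  · exact h
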